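/- Let λ < κ be cardinals and U a λ-decomposable ultrafilter over κ. Then the ultrafilter number u(λ) is at most the character χ(U). -/
import Mathlib


open Cardinal Set

universe u v

/-- An ultrafilter is uniform if all of its members have full cardinality. -/
def Uniform {α : Type u} (U : Ultrafilter α) : Prop := ∀ X ∈ U, #X = #α

/-- An ultrafilter `U` over `S` is `l`-decomposable if there is `f : S → l`
such that preimages of sets of size `< l` are not in `U`. -/
def Decomposable {S : Type u} (U : Ultrafilter S) (l : Cardinal.{v}) : Prop :=
  ∃ f : S → l.out, ∀ X : Set l.out, #X < l → f ⁻¹' X ∉ U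

/-- The character of an ultrafilter: the least cardinality of a base. -/
noncomputable def charU {α : Type u} (U : Ultrafilter α) : Cardinal.{u} :=
  sInf {c | ∃ B : Set (Set α), #B = c ∧ (∀ X ∈ B, X ∈ U) ∧ ∀ Y ∈ U, ∃ X ∈ B, X ⊆ Y}

/-- The ultrafilter number at a cardinal `κ`: the minimal character of a
uniform ultrafilter over (a set of size) `κ`. -/
noncomputable def uNumber (κ : Cardinal.{u}) : Cardinal.{u} :=
  sInf {c | ∃ U : Ultrafilter κ.out, Uniform U ∧ charU U = c}

/-- If `λ < κ` and `U` is a `λ`-decomposable ultrafilter over `κ`,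
then `u(λ) ≤ χ(U)`. -/
theorem stmt6 (l κ : Cardinal.{u}) (h : l < κ) (U : Ultrafilter κ.out)
    (hd : Decomposable U l) : uNumber l ≤ charU U := by
  obtain ⟨f, hf⟩ := hd
  set V : Ultrafilter l.out := U.map f with hVdef
  have hmem : ∀ X : Set l.out, X ∈ V ↔ f ⁻¹' X ∈ U := fun X => Ultrafilter.mem_map
  -- V is uniform
  have hVuni : Uniform V := by
    intro X hX
    have h1 : l ≤ #X := le_of_not_gt fun hlt => hf X hlt ((hmem X).mp hX)
    have h2 : #X ≤ #l.out := mk_set_le X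
    rw [mk_out] at h2
    rw [mk_out]
    exact le_antisymm h2 h1
  -- the defining set of charU U is nonempty
  have hne : {c | ∃ B : Set (Set κ.out), #B = c ∧ (∀ X ∈ B, X ∈ U) ∧
      ∀ Y ∈ U, ∃ X ∈ B, X ⊆ Y}.Nonempty := by
    refine ⟨#{X : Set κ.out | X ∈ U}, {X | X ∈ U}, rfl, fun X hX => hX, fun Y hY => ⟨Y, hY, subset_rfl⟩⟩
  obtain ⟨B, hBcard, hBU, hBbase⟩ := csInf_mem hne
  -- push the base forward
  have hchar : charU V ≤ charU U := by
    have hB' : charU V ≤ #((Set.image f) '' B) := by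
      apply csInf_le'
      refine ⟨(Set.image f) '' B, rfl, ?_, ?_⟩
      · rintro X' ⟨X, hX, rfl⟩
        exact (hmem _).mpr (Filter.mem_of_superset (hBU X hX) (subset_preimage_image f X))
      · intro Y hY
        obtain ⟨X, hX, hXY⟩ := hBbase (f ⁻¹' Y) ((hmem Y).mp hY)
        exact ⟨f '' X, ⟨X, hX, rfl⟩, (image_subset_iff.mpr hXY)⟩
    calc charU V ≤ #((Set.image f) '' B) := hB'
      _ ≤ #B := mk_image_le
      _ = charU U := hBcard
  have huN : uNumber l ≤ charU V := csInf_le' ⟨V, hVuni, rfl⟩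
  exact le_trans huN hchar
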